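/- For every nonzero integer m, let S_m(n) = (1/m)·Σ_{k=1}^{n} ((−1)^{k+1}/k)·C(m·k, k)·C(n + (m−1)·k, n − k) for n ≥ 1 and S_m(0) = 0, and let A_m = Σ_{n≥0} S_m(n)·x^n ∈ ℚ[[x]]. Then (1 − x)·A_m = Σ_{n≥1} x^n/n, i.e., A_m = −log(1 − x)/(1 − x) as formal power series. -/

import Mathlib

open PowerSeries

/-- Generalized binomial coefficient `C(a, b) = a(a-1)⋯(a-b+1)/b!` for `a : ℚ`, `b : ℕ`. -/
noncomputable def gchoose (a : ℚ) (b : ℕ) : ℚ :=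
  (∏ i ∈ Finset.range b, (a - i)) / (Nat.factorial b)

open Finset

lemma gchoose_zero (a : ℚ) : gchoose a 0 = 1 := by simp [gchoose]

lemma fact_cast (b : ℕ) : ((b+1).factorial : ℚ) = ((b:ℚ)+1) * (b.factorial : ℚ) := by
  rw [Nat.factorial_succ]; push_cast; ring

lemma fact_ne (b : ℕ) : (b.factorial : ℚ) ≠ 0 := by
  exact_mod_cast b.factorial_ne_zero

lemma prod_shift (a : ℚ) (b : ℕ) :
    ∏ i ∈ range (b+1), (a - i) = a * ∏ i ∈ range b, (a - 1 - i) := by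
  rw [Finset.prod_range_succ']
  simp only [Nat.cast_zero, sub_zero, Nat.cast_add, Nat.cast_one]
  rw [mul_comm]
  congr 1
  apply Finset.prod_congr rfl
  intro i _
  ring

lemma gchoose_pascal (a : ℚ) (b : ℕ) :
    gchoose a (b+1) = gchoose (a-1) (b+1) + gchoose (a-1) b := by
  unfold gchoose
  rw [prod_shift, Finset.prod_range_succ, fact_cast]
  have h1 := fact_ne b
  have h2 : ((b:ℚ)+1) ≠ 0 := by positivity
  field_simp
  ring

lemma gchoose_succ_left (a : ℚ) (j : ℕ) :
    ((j:ℚ)+1) * gchoose a (j+1) = a * gchoose (a-1) j := by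
  unfold gchoose
  rw [prod_shift, fact_cast]
  have h1 := fact_ne j
  have h2 : ((j:ℚ)+1) ≠ 0 := by positivity
  field_simp

lemma gchoose_succ_left' (a : ℚ) (j : ℕ) :
    ((j:ℚ)+1) * gchoose (a-1) (j+1) = (a - ((j:ℚ)+1)) * gchoose (a-1) j := by
  unfold gchoose
  rw [Finset.prod_range_succ, fact_cast]
  have h1 := fact_ne j
  have h2 : ((j:ℚ)+1) ≠ 0 := by positivity
  field_simp
  ring

lemma gchoose_nat_self (N : ℕ) : gchoose (N:ℚ) N = 1 := by
  induction N with
  | zero => simp [gchoose]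
  | succ j ih =>
      have h := gchoose_succ_left ((j:ℚ)+1) j
      have h2 : ((j:ℚ)+1) ≠ 0 := by positivity
      have : ((j:ℚ)+1) - 1 = (j:ℚ) := by ring
      rw [this, ih] at h
      have : gchoose ((j:ℚ)+1) (j+1) = 1 := by
        field_simp at h; linarith [h]
      simpa [Nat.cast_succ] using this

lemma gchoose_nat_pred (N : ℕ) (h : 1 ≤ N) : gchoose ((N:ℚ)-1) N = 0 := by
  unfold gchoose
  rw [Finset.prod_eq_zero (i := N-1) (by simp; omega)]
  · simp
  · have : ((N-1 : ℕ):ℚ) = (N:ℚ) - 1 := by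
      push_cast [Nat.cast_sub h]; ring
    rw [this]; ring

lemma gchoose_neg (μ : ℚ) (k : ℕ) :
    gchoose (μ * k) k = (-1)^k * gchoose ((1-μ) * k - 1) k := by
  unfold gchoose
  have key : ∏ i ∈ range k, ((1-μ) * k - 1 - i) = (-1)^k * ∏ i ∈ range k, (μ * k - i) := by
    rw [← Finset.prod_range_reflect (fun j => (μ * k - j)) k]
    rw [show ((-1:ℚ))^k = ∏ _i ∈ range k, (-1:ℚ) by simp, ← Finset.prod_mul_distrib]
    apply Finset.prod_congr rfl
    intro i hi
    have hik : i < k := Finset.mem_range.mp hi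
    have : ((k - 1 - i : ℕ) : ℚ) = (k:ℚ) - 1 - i := by
      have : k - 1 - i = k - (1+i) := by omega
      rw [this, Nat.cast_sub (by omega)]
      push_cast; ring
    rw [this]
    ring
  rw [key, mul_div_assoc, ← mul_assoc, ← pow_add, ← two_mul, pow_mul]
  norm_num


/-- `D(y,z,j)`: the "weighted" binomial, denominator-free form. -/
noncomputable def DD (y z : ℚ) : ℕ → ℚ
  | 0 => 1
  | (j+1) => gchoose (y + ((j:ℚ)+1)*z) (j+1) - z * gchoose (y - 1 + ((j:ℚ)+1)*z) j

lemma DD_zero_left (z : ℚ) (j : ℕ) : DD 0 z (j+1) = 0 := by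
  show gchoose (0 + ((j:ℚ)+1)*z) (j+1) - z * gchoose (0 - 1 + ((j:ℚ)+1)*z) j = 0
  have h := gchoose_succ_left (((j:ℚ)+1)*z) j
  have h2 : ((j:ℚ)+1) ≠ 0 := by positivity
  have e1 : (0:ℚ) + ((j:ℚ)+1)*z = ((j:ℚ)+1)*z := by ring
  have e2 : (0:ℚ) - 1 + ((j:ℚ)+1)*z = ((j:ℚ)+1)*z - 1 := by ring
  rw [e1, e2]
  have : gchoose (((j:ℚ)+1)*z) (j+1) = (((j:ℚ)+1)*z) * gchoose (((j:ℚ)+1)*z - 1) j / ((j:ℚ)+1) := by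
    rw [eq_div_iff h2]; linear_combination h
  rw [this]
  field_simp
  ring

lemma DD_pascal (y z : ℚ) (j : ℕ) :
    DD y z (j+1) = DD (y-1) z (j+1) + DD (y-1+z) z j := by
  cases j with
  | zero =>
      show gchoose (y + ((0:ℚ)+1)*z) 1 - z * gchoose (y - 1 + ((0:ℚ)+1)*z) 0
        = (gchoose ((y-1) + ((0:ℚ)+1)*z) 1 - z * gchoose ((y-1) - 1 + ((0:ℚ)+1)*z) 0) + 1
      have g1 : ∀ a : ℚ, gchoose a 1 = a := by
        intro a; unfold gchoose; simp
      rw [g1, g1, gchoose_zero, gchoose_zero]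
      ring
  | succ i =>
      simp only [DD]
      push_cast
      have p1 := gchoose_pascal (y + ((i:ℚ)+1+1)*z) (i+1)
      have p2 := gchoose_pascal (y - 1 + ((i:ℚ)+1+1)*z) i
      have e1 : y + ((i:ℚ)+1+1)*z - 1 = (y-1) + ((i:ℚ)+1+1)*z := by ring
      have e2 : (y-1+z) + ((i:ℚ)+1)*z = (y-1) + ((i:ℚ)+1+1)*z := by ring
      have e3 : y - 1 + ((i:ℚ)+1+1)*z - 1 = (y-1) - 1 + ((i:ℚ)+1+1)*z := by ring
      have e4 : (y-1+z) - 1 + ((i:ℚ)+1)*z = (y-1) - 1 + ((i:ℚ)+1+1)*z := by ring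
      rw [p1, p2, e1, e2, e3, e4]
      ring


/-- Polynomial (in `y`) representing `y ↦ gchoose (y + c) j`. -/
noncomputable def gchoosePoly (c : ℚ) (j : ℕ) : Polynomial ℚ :=
  Polynomial.C ((j.factorial : ℚ))⁻¹ * ∏ i ∈ range j, (Polynomial.X + Polynomial.C (c - i))

lemma eval_gchoosePoly (c : ℚ) (j : ℕ) (y : ℚ) :
    (gchoosePoly c j).eval y = gchoose (y + c) j := by
  unfold gchoosePoly gchoose
  rw [Polynomial.eval_mul, Polynomial.eval_C, Polynomial.eval_prod]
  rw [div_eq_inv_mul]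
  congr 1
  apply Finset.prod_congr rfl
  intro i _
  simp [Polynomial.eval_add]
  ring

/-- Polynomial (in `y`) representing `y ↦ DD y z j`. -/
noncomputable def DDPoly (z : ℚ) : ℕ → Polynomial ℚ
  | 0 => 1
  | (j+1) => gchoosePoly (((j:ℚ)+1)*z) (j+1) - Polynomial.C z * gchoosePoly (((j:ℚ)+1)*z - 1) j

lemma eval_DDPoly (z : ℚ) (j : ℕ) (y : ℚ) : (DDPoly z j).eval y = DD y z j := by
  cases j with
  | zero => simp [DDPoly, DD]
  | succ i =>
      simp only [DDPoly, DD, Polynomial.eval_sub, Polynomial.eval_mul, Polynomial.eval_C,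
        eval_gchoosePoly]
      have e1 : y + ((i:ℚ)+1)*z = y + (↑i+1)*z := rfl
      have e2 : y + (((i:ℚ)+1)*z - 1) = y - 1 + ((i:ℚ)+1)*z := by ring
      rw [e2]

/-- A rational polynomial whose eval satisfies `f y = f (y-1)` is constant. -/
lemma eval_const_of_step (P : Polynomial ℚ) (h : ∀ y : ℚ, P.eval y = P.eval (y-1)) :
    ∀ y : ℚ, P.eval y = P.eval 0 := by
  have hn : ∀ n : ℕ, P.eval (n:ℚ) = P.eval 0 := by
    intro n
    induction n with
    | zero => norm_num
    | succ k ih =>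
        have := h ((k:ℚ)+1)
        push_cast
        rw [this]
        simpa using ih
  have hQ : P - Polynomial.C (P.eval 0) = 0 := by
    by_contra hne
    have hfin : {x : ℚ | (P - Polynomial.C (P.eval 0)).IsRoot x}.Finite :=
      Polynomial.finite_setOf_isRoot hne
    have hsub : Set.range ((↑) : ℕ → ℚ) ⊆ {x : ℚ | (P - Polynomial.C (P.eval 0)).IsRoot x} := by
      rintro x ⟨n, rfl⟩
      simp [Polynomial.IsRoot, hn n]
    exact (Set.infinite_range_of_injective Nat.cast_injective) (hfin.subset hsub)
  intro y
  have := congrArg (Polynomial.eval y) hQ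
  simpa [sub_eq_zero] using this

/-- The master Hagen–Rothe-type identity. -/
lemma HR (z x : ℚ) : ∀ N : ℕ, ∀ y : ℚ,
    ∑ k ∈ range (N+1), gchoose (x + (k:ℚ)*z) k * DD y z (N-k) = gchoose (x + y + (N:ℚ)*z) N := by
  intro N
  induction N with
  | zero =>
      intro y
      simp [DD, gchoose_zero]
  | succ M ih =>
      -- f y := LHS - RHS is polynomial in y, satisfies f y = f (y-1), and f 0 = 0.
      set N := M + 1 with hN
      set P : Polynomial ℚ :=
        (∑ k ∈ range (N+1), Polynomial.C (gchoose (x + (k:ℚ)*z) k) * DDPoly z (N-k))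
          - gchoosePoly (x + (N:ℚ)*z) N with hP
      have hPeval : ∀ y : ℚ, P.eval y =
          (∑ k ∈ range (N+1), gchoose (x + (k:ℚ)*z) k * DD y z (N-k))
            - gchoose (x + y + (N:ℚ)*z) N := by
        intro y
        rw [hP]
        rw [Polynomial.eval_sub, Polynomial.eval_finset_sum]
        congr 1
        · apply Finset.sum_congr rfl
          intro k _
          rw [Polynomial.eval_mul, Polynomial.eval_C, eval_DDPoly]
        · rw [eval_gchoosePoly]
          congr 1
          ring
      have hstep : ∀ y : ℚ, P.eval y = P.eval (y-1) := by
        intro y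
        rw [hPeval, hPeval]
        have key : (∑ k ∈ range (N+1), gchoose (x + (k:ℚ)*z) k * DD y z (N-k))
            - (∑ k ∈ range (N+1), gchoose (x + (k:ℚ)*z) k * DD (y-1) z (N-k))
            = ∑ k ∈ range N, gchoose (x + (k:ℚ)*z) k * DD (y-1+z) z (M-k) := by
          rw [← Finset.sum_sub_distrib]
          rw [Finset.sum_range_succ]
          have hlast : gchoose (x + (N:ℚ)*z) N * DD y z (N-N)
              - gchoose (x + (N:ℚ)*z) N * DD (y-1) z (N-N) = 0 := by
            simp [DD]
          rw [hlast, add_zero]  -- might need different structure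
          apply Finset.sum_congr rfl
          intro k hk
          have hkM : k < N := Finset.mem_range.mp hk
          have : N - k = (M - k) + 1 := by omega
          rw [this, ← mul_sub]
          rw [DD_pascal (y) z (M-k)]
          ring
        have keyR : gchoose (x + y + (N:ℚ)*z) N - gchoose (x + (y-1) + (N:ℚ)*z) N
            = gchoose (x + (y-1+z) + (M:ℚ)*z) M := by
          have p := gchoose_pascal (x + y + (N:ℚ)*z) M
          have e1 : x + y + (N:ℚ)*z - 1 = x + (y-1) + (N:ℚ)*z := by ring
          have e2 : x + (y-1+z) + (M:ℚ)*z = x + y + (N:ℚ)*z - 1 := by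
            rw [hN]; push_cast; ring
          rw [e2, e1] at *
          rw [show N = M + 1 from rfl] at *
          rw [p, e1]
          ring_nf
        have ihy := ih (y-1+z)
        linarith [key, keyR, ihy]
      have h0 : P.eval 0 = 0 := by
        rw [hPeval]
        have : ∑ k ∈ range (N+1), gchoose (x + (k:ℚ)*z) k * DD 0 z (N-k)
            = gchoose (x + (N:ℚ)*z) N := by
          rw [Finset.sum_eq_single N]
          · simp [DD]
          · intro k hk hkne
            have hkM : k < N := by
              have := Finset.mem_range.mp hk; omega
            have : N - k = (N - k - 1) + 1 := by omega
            rw [this, DD_zero_left]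
            ring
          · intro h; exact absurd (Finset.self_mem_range_succ N) h
        rw [this]
        ring_nf
      intro y
      have := eval_const_of_step P hstep y
      have h2 := hPeval y
      rw [this, h0] at h2
      linarith [h2]


lemma V_lemma (μ : ℚ) : ∀ N : ℕ,
    ∑ k ∈ range (N+1), gchoose (-1 + (k:ℚ)*(1-μ)) k
      * gchoose (μ*N + ((N-k : ℕ):ℚ)*(1-μ)) (N-k) = (1-μ)^N := by
  intro N
  induction N with
  | zero => simp [gchoose_zero]
  | succ M ih =>
      set z : ℚ := 1 - μ with hz
      have h := HR z (-1) (M+1) (μ*(M+1))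
      have hRHS : gchoose ((-1) + μ*((M:ℚ)+1) + ((M:ℚ)+1)*z) (M+1) = 0 := by
        have e : (-1) + μ*((M:ℚ)+1) + ((M:ℚ)+1)*z = ((M+1:ℕ):ℚ) - 1 := by
          rw [hz]; push_cast; ring
        rw [e, gchoose_nat_pred (M+1) (by omega)]
      rw [show (((M+1:ℕ)):ℚ) = (M:ℚ)+1 by push_cast; ring] at h
      rw [hRHS] at h
      -- expand the DD in h
      have hterm : ∀ k ∈ range (M+1), gchoose (-1 + (k:ℚ)*z) k * DD (μ*((M:ℚ)+1)) z (M+1-k)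
          = gchoose (-1 + (k:ℚ)*z) k * gchoose (μ*((M:ℚ)+1) + ((M+1-k : ℕ):ℚ)*z) (M+1-k)
            - z * (gchoose (-1 + (k:ℚ)*z) k * gchoose (μ*(M:ℚ) + ((M-k : ℕ):ℚ)*z) (M-k)) := by
        intro k hk
        have hkM : k ≤ M := by have := Finset.mem_range.mp hk; omega
        have h1 : M + 1 - k = (M - k) + 1 := by omega
        have hc1 : ((M+1-k : ℕ):ℚ) = ((M-k : ℕ):ℚ) + 1 := by
          rw [h1]; push_cast; ring
        have hDD : DD (μ*((M:ℚ)+1)) z ((M-k)+1)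
            = gchoose (μ*((M:ℚ)+1) + (((M-k:ℕ):ℚ)+1)*z) ((M-k)+1)
              - z * gchoose (μ*(M:ℚ) + ((M-k:ℕ):ℚ)*z) (M-k) := by
          show gchoose (μ*((M:ℚ)+1) + (((M-k:ℕ):ℚ)+1)*z) ((M-k)+1)
              - z * gchoose (μ*((M:ℚ)+1) - 1 + (((M-k:ℕ):ℚ)+1)*z) (M-k) = _
          have e2 : μ*((M:ℚ)+1) - 1 + (((M-k:ℕ):ℚ)+1)*z = μ*(M:ℚ) + ((M-k:ℕ):ℚ)*z := by
            rw [hz]; ring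
          rw [e2]
        rw [h1, hDD]
        push_cast
        ring
      have hsplit : ∑ k ∈ range (M+2), gchoose (-1 + (k:ℚ)*z) k * DD (μ*((M:ℚ)+1)) z (M+1-k)
          = (∑ k ∈ range (M+2), gchoose (-1 + (k:ℚ)*z) k
              * gchoose (μ*((M:ℚ)+1) + ((M+1-k : ℕ):ℚ)*z) (M+1-k))
            - z * ∑ k ∈ range (M+1), gchoose (-1 + (k:ℚ)*z) k
              * gchoose (μ*(M:ℚ) + ((M-k : ℕ):ℚ)*z) (M-k) := by
        rw [Finset.sum_range_succ, Finset.sum_range_succ (n := M+1)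
          (f := fun k => gchoose (-1 + (k:ℚ)*z) k
              * gchoose (μ*((M:ℚ)+1) + ((M+1-k : ℕ):ℚ)*z) (M+1-k))]
        rw [Finset.sum_congr rfl hterm, Finset.sum_sub_distrib, ← Finset.mul_sum]
        have hlast : DD (μ*((M:ℚ)+1)) z (M+1-(M+1)) = 1 := by
          simp [DD]
        have hlast2 : gchoose (μ*((M:ℚ)+1) + ((M+1-(M+1) : ℕ):ℚ)*z) (M+1-(M+1)) = 1 := by
          simp [gchoose_zero]
        rw [hlast, hlast2]
        ring
      rw [hsplit] at h
      rw [ih] at h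
      have : ∑ k ∈ range (M+2), gchoose (-1 + (k:ℚ)*z) k
          * gchoose (μ*((M:ℚ)+1) + ((M+1-k : ℕ):ℚ)*z) (M+1-k) = z * (1-μ)^M := by
        linarith [h]
      rw [show (1-μ)^(M+1) = z * (1-μ)^M by rw [hz]; ring]
      push_cast at this ⊢
      convert this using 1


lemma Vprime (μ : ℚ) (N : ℕ) :
    ∑ k ∈ range (N+1), (-1:ℚ)^k * gchoose (μ*k) k
      * gchoose (μ*k + ((N-k : ℕ):ℚ)) (N-k) = (1-μ)^N := by
  have h := V_lemma μ N
  rw [← h]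
  apply Finset.sum_congr rfl
  intro k hk
  have hkN : k ≤ N := by have := Finset.mem_range.mp hk; omega
  have e1 : -1 + (k:ℚ)*(1-μ) = (1-μ)*k - 1 := by ring
  have e2 : μ*(N:ℚ) + ((N-k : ℕ):ℚ)*(1-μ) = μ*k + ((N-k : ℕ):ℚ) := by
    rw [Nat.cast_sub hkN]; ring
  rw [e1, e2]
  have hneg : gchoose ((1-μ)*k - 1) k = (-1:ℚ)^k * gchoose (μ*k) k := by
    rw [gchoose_neg μ k, ← mul_assoc, ← pow_add, ← two_mul, pow_mul]
    norm_num
  rw [hneg]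

lemma Q_eq (μ : ℚ) (N : ℕ) :
    ∑ k ∈ Icc 1 N, (-1:ℚ)^(k+1) * gchoose (μ*k) k
      * gchoose (μ*k + ((N-k : ℕ):ℚ)) (N-k) = 1 - (1-μ)^N := by
  have h := Vprime μ N
  have hins : range (N+1) = insert 0 (Icc 1 N) := by
    ext x
    simp only [Finset.mem_range, Finset.mem_insert, Finset.mem_Icc]
    omega
  rw [hins, Finset.sum_insert (by simp)] at h
  have ht0 : (-1:ℚ)^0 * gchoose (μ*(0:ℕ)) 0 * gchoose (μ*((0:ℕ):ℚ) + ((N-0 : ℕ):ℚ)) (N-0) = 1 := by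
    have e : μ*((0:ℕ):ℚ) + ((N-0 : ℕ):ℚ) = (N:ℚ) := by
      rw [Nat.sub_zero]; push_cast; ring
    rw [e, Nat.sub_zero, gchoose_nat_self]
    simp [gchoose_zero]
  rw [ht0] at h
  have flip : ∀ k ∈ Icc 1 N,
      (-1:ℚ)^(k+1) * gchoose (μ*k) k * gchoose (μ*k + ((N-k : ℕ):ℚ)) (N-k)
      = -((-1:ℚ)^k * gchoose (μ*k) k * gchoose (μ*k + ((N-k : ℕ):ℚ)) (N-k)) := by
    intro k _
    ring
  rw [Finset.sum_congr rfl flip, Finset.sum_neg_distrib]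
  linarith [h]


lemma T_eq (μ : ℚ) (M : ℕ) :
    ((M:ℚ)+1) * ∑ k ∈ Icc 1 (M+1), ((-1:ℚ)^(k+1)/k) * gchoose (μ*k) k
      * gchoose ((M:ℚ) + (μ-1)*k) (M+1-k) = μ := by
  rw [Finset.mul_sum]
  rw [Finset.sum_Icc_succ_top (by omega : 1 ≤ M+1)]
  have hterm : ∀ k ∈ Icc 1 M,
      ((M:ℚ)+1) * (((-1:ℚ)^(k+1)/k) * gchoose (μ*k) k * gchoose ((M:ℚ) + (μ-1)*k) (M+1-k))
      = (-1:ℚ)^(k+1) * gchoose (μ*k) k * gchoose (μ*k + ((M+1-k:ℕ):ℚ)) (M+1-k)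
        + (μ-1) * ((-1:ℚ)^(k+1) * gchoose (μ*k) k * gchoose (μ*k + ((M-k:ℕ):ℚ)) (M-k)) := by
    intro k hk
    obtain ⟨hk1, hkM⟩ := Finset.mem_Icc.mp hk
    set jj := M - k with hjj
    have hMk : M + 1 - k = jj + 1 := by omega
    have hcMk : ((M-k:ℕ):ℚ) = (M:ℚ) - k := by
      rw [Nat.cast_sub hkM]
    have hcMk1 : ((M+1-k:ℕ):ℚ) = (M:ℚ) + 1 - k := by
      rw [Nat.cast_sub (by omega : k ≤ M+1)]; push_cast; ring
    set a : ℚ := μ*k + ((M+1-k:ℕ):ℚ) with ha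
    have ha1 : a - 1 = μ*k + ((M-k:ℕ):ℚ) := by
      rw [ha, hcMk, hcMk1]; ring
    have ha2 : (M:ℚ) + (μ-1)*k = a - 1 := by
      rw [ha1, hcMk]; ring
    have hjc : ((jj:ℕ):ℚ) + 1 = (M:ℚ) + 1 - k := by
      rw [hjj, Nat.cast_sub hkM]; ring
    have h1 := gchoose_succ_left' a jj
    have h2 := gchoose_pascal a jj
    have hak : a - (((jj:ℕ):ℚ)+1) = μ*k := by
      rw [ha, hjc, hcMk1]; ring
    rw [hak] at h1
    -- (M+1) * g(a-1)(jj+1) = k * g a (jj+1) + k*(μ-1)*g(a-1) jj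
    have hkey : ((M:ℚ)+1) * gchoose (a-1) (jj+1)
        = (k:ℚ) * gchoose a (jj+1) + (k:ℚ)*(μ-1) * gchoose (a-1) jj := by
      have hM1 : (M:ℚ)+1 = (k:ℚ) + (((jj:ℕ):ℚ)+1) := by
        rw [hjj, Nat.cast_sub hkM]; ring
      rw [hM1, add_mul, h1, h2]
      ring
    have hkne : (k:ℚ) ≠ 0 := by
      exact_mod_cast Nat.cast_ne_zero.mpr (by omega : k ≠ 0)
    rw [ha2, hMk, ha1.symm]
    have hk' : (k:ℚ) * (k:ℚ)⁻¹ = 1 := mul_inv_cancel₀ hkne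
    linear_combination ((-1:ℚ)^(k+1) * gchoose (μ*k) k / k) * hkey
      + ((-1:ℚ)^(k+1) * gchoose (μ*k) k * (gchoose a (jj+1) + (μ-1) * gchoose (a-1) jj)) * hk'
  rw [Finset.sum_congr rfl hterm, Finset.sum_add_distrib, ← Finset.mul_sum]
  have hlast : ((M:ℚ)+1) * (((-1:ℚ)^(M+1+1)/((M+1:ℕ):ℚ)) * gchoose (μ*(M+1:ℕ)) (M+1)
        * gchoose ((M:ℚ) + (μ-1)*((M+1:ℕ):ℚ)) (M+1-(M+1)))
      = (-1:ℚ)^(M+1+1) * gchoose (μ*(M+1:ℕ)) (M+1)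
        * gchoose (μ*((M+1:ℕ):ℚ) + ((M+1-(M+1):ℕ):ℚ)) (M+1-(M+1)) := by
    rw [Nat.sub_self, gchoose_zero, gchoose_zero]
    have h0 : ((M+1:ℕ):ℚ) ≠ 0 := by positivity
    field_simp
    norm_num
  push_cast at hlast ⊢
  rw [hlast]
  have hQ1 := Q_eq μ (M+1)
  have hQ2 := Q_eq μ M
  rw [Finset.sum_Icc_succ_top (by omega : 1 ≤ M+1)] at hQ1
  push_cast at hQ1 hQ2
  have hpow : (1-μ)^(M+1) = (1-μ)^M * (1-μ) := pow_succ _ _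
  have habs : ∀ t : ℚ, (1 - t*(1-μ)) + (μ-1)*(1-t) = μ := by intro t; ring
  calc _ = (1 - (1-μ)^(M+1)) + (μ-1)*(1 - (1-μ)^M) := by
            rw [← hQ1, ← hQ2]; ring
    _ = μ := by rw [hpow]; exact habs _


lemma Ssum_diff (μ : ℚ) (M : ℕ) :
    (∑ k ∈ Icc 1 (M+1), ((-1:ℚ)^(k+1)/k) * gchoose (μ*k) k
        * gchoose (((M+1:ℕ):ℚ) + (μ-1)*k) (M+1-k))
      - (∑ k ∈ Icc 1 M, ((-1:ℚ)^(k+1)/k) * gchoose (μ*k) k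
        * gchoose ((M:ℚ) + (μ-1)*k) (M-k))
    = ∑ k ∈ Icc 1 (M+1), ((-1:ℚ)^(k+1)/k) * gchoose (μ*k) k
        * gchoose ((M:ℚ) + (μ-1)*k) (M+1-k) := by
  rw [Finset.sum_Icc_succ_top (by omega : 1 ≤ M+1),
      Finset.sum_Icc_succ_top (by omega : 1 ≤ M+1)
        (f := fun k => ((-1:ℚ)^(k+1)/k) * gchoose (μ*k) k
          * gchoose ((M:ℚ) + (μ-1)*k) (M+1-k))]
  rw [Nat.sub_self, gchoose_zero, gchoose_zero]
  have hmain : ∀ k ∈ Icc 1 M,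
      ((-1:ℚ)^(k+1)/k) * gchoose (μ*k) k * gchoose (((M+1:ℕ):ℚ) + (μ-1)*k) (M+1-k)
        - ((-1:ℚ)^(k+1)/k) * gchoose (μ*k) k * gchoose ((M:ℚ) + (μ-1)*k) (M-k)
      = ((-1:ℚ)^(k+1)/k) * gchoose (μ*k) k * gchoose ((M:ℚ) + (μ-1)*k) (M+1-k) := by
    intro k hk
    obtain ⟨hk1, hkM⟩ := Finset.mem_Icc.mp hk
    have hMk : M + 1 - k = (M-k) + 1 := by omega
    have hp := gchoose_pascal (((M+1:ℕ):ℚ) + (μ-1)*k) (M-k)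
    have e1 : ((M+1:ℕ):ℚ) + (μ-1)*k - 1 = (M:ℚ) + (μ-1)*k := by push_cast; ring
    rw [e1] at hp
    rw [hMk, hp]
    ring
  rw [← Finset.sum_congr rfl hmain, Finset.sum_sub_distrib]
  push_cast
  ring


/-- `S_m(n)` is the right-hand side of Bala's identity, with `S_m(0) = 0`. -/
noncomputable def S (m : ℤ) (n : ℕ) : ℚ :=
  (1 / (m : ℚ)) * ∑ k ∈ Finset.Icc 1 n,
    ((-1 : ℚ) ^ (k + 1) / (k : ℚ)) * gchoose ((m : ℚ) * k) k *
      gchoose ((n : ℚ) + ((m : ℚ) - 1) * k) (n - k)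

/-- For every nonzero integer `m`, the generating function `A_m = Σ_{n≥0} S_m(n) x^n`
satisfies `(1 − x)·A_m = Σ_{n≥1} x^n/n`, i.e. `A_m = −log(1−x)/(1−x)`. -/
theorem generating_function_eq (m : ℤ) (hm : m ≠ 0) :
    (1 - X) * (PowerSeries.mk fun n => S m n) =
      PowerSeries.mk fun n => if n = 0 then 0 else 1 / (n : ℚ) := by
  have hμ : ((m:ℚ)) ≠ 0 := Int.cast_ne_zero.mpr hm
  ext n
  rw [sub_mul, one_mul, map_sub, coeff_mk]
  cases n with
  | zero =>
      simp [S]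
  | succ M =>
      rw [PowerSeries.coeff_succ_X_mul, coeff_mk, coeff_mk]
      simp only [Nat.succ_ne_zero, if_false]
      have hdiff := Ssum_diff (m:ℚ) M
      have hT := T_eq (m:ℚ) M
      have hM1 : ((M:ℚ)+1) ≠ 0 := by positivity
      have hD : ∑ k ∈ Icc 1 (M+1), ((-1:ℚ)^(k+1)/k) * gchoose ((m:ℚ)*k) k
          * gchoose ((M:ℚ) + ((m:ℚ)-1)*k) (M+1-k) = (m:ℚ)/((M:ℚ)+1) := by
        rw [eq_div_iff hM1]
        linarith [hT]
      rw [hD] at hdiff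
      show (1 / (m : ℚ)) * (∑ k ∈ Finset.Icc 1 (M+1),
          ((-1 : ℚ) ^ (k + 1) / (k : ℚ)) * gchoose ((m : ℚ) * k) k *
            gchoose (((M+1 : ℕ) : ℚ) + ((m : ℚ) - 1) * k) (M+1 - k))
        - (1 / (m : ℚ)) * (∑ k ∈ Finset.Icc 1 M,
          ((-1 : ℚ) ^ (k + 1) / (k : ℚ)) * gchoose ((m : ℚ) * k) k *
            gchoose (((M : ℕ) : ℚ) + ((m : ℚ) - 1) * k) (M - k)) = 1 / (((M+1:ℕ)) : ℚ)
      rw [← mul_sub, hdiff]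
      push_cast
      field_simp
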